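/- Let R be an ADE root system in a Euclidean space V (all roots of squared length 2) and Q(R) the lattice it generates. Then every vector v ∈ Q(R) with v·v = 2 belongs to R; that is, R(Q(R)) = R. -/

import Mathlib

private lemma root_lattice_aux {V : Type*}
    [NormedAddCommGroup V] [InnerProductSpace ℝ V]
    (R : Finset V)
    (hlen : ∀ α ∈ R, (inner ℝ α α : ℝ) = 2)
    (hintegral : ∀ α ∈ R, ∀ β ∈ R, ∃ m : ℤ, (inner ℝ α β : ℝ) = m)
    (hrefl : ∀ α ∈ R, ∀ β ∈ R, β - (inner ℝ α β : ℝ) • α ∈ R) :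
    ∀ n : ℕ, ∀ v : V, ∀ c : V → ℤ, (∑ α ∈ R, c α • α = v) →
      (∑ α ∈ R, (c α).natAbs ≤ n) → (inner ℝ v v : ℝ) = 2 → v ∈ R := by
  classical
  intro n
  induction n with
  | zero =>
      intro v c hc hn hvlen
      have hall : ∀ α ∈ R, c α = 0 := by
        intro α hα
        have := Finset.sum_eq_zero_iff.mp (Nat.le_zero.mp hn) α hα
        omega
      have hv0 : v = 0 := by
        rw [← hc]; exact Finset.sum_eq_zero fun α hα => by rw [hall α hα, zero_smul]
      rw [hv0] at hvlen
      simp at hvlen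
  | succ n ih =>
      intro v c hc hn hvlen
      -- inner ℝ v v = ∑ c α * inner ℝ α v
      have hsum : (2 : ℝ) = ∑ α ∈ R, (c α : ℝ) * (inner ℝ α v : ℝ) := by
        calc (2:ℝ) = (inner ℝ v v : ℝ) := hvlen.symm
        _ = inner ℝ (∑ α ∈ R, c α • α) v := by rw [hc]
        _ = ∑ α ∈ R, (c α : ℝ) * (inner ℝ α v : ℝ) := by
            rw [sum_inner]
            refine Finset.sum_congr rfl fun α hα => ?_
            rw [← Int.cast_smul_eq_zsmul ℝ, real_inner_smul_left]
      -- some positive term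
      have hex : ∃ α ∈ R, 0 < (c α : ℝ) * (inner ℝ α v : ℝ) := by
        by_contra h
        push_neg at h
        have : (∑ α ∈ R, (c α : ℝ) * (inner ℝ α v : ℝ)) ≤ 0 :=
          Finset.sum_nonpos h
        linarith [hsum ▸ this]
      obtain ⟨α, hαR, hpos⟩ := hex
      -- inner ℝ α v is an integer m
      have hint : ∃ m : ℤ, (inner ℝ α v : ℝ) = m := by
        have : (inner ℝ α v : ℝ) = ∑ β ∈ R, (c β : ℝ) * (inner ℝ α β : ℝ) := by
          rw [← hc, inner_sum]
          refine Finset.sum_congr rfl fun β hβ => ?_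
          rw [← Int.cast_smul_eq_zsmul ℝ, real_inner_smul_right]
        choose g hg using fun β (hβ : β ∈ R) => hintegral α hαR β hβ
        refine ⟨∑ β ∈ R.attach, c β * g β β.2, ?_⟩
        rw [this, ← Finset.sum_attach R fun β => (c β : ℝ) * (inner ℝ α β : ℝ)]
        push_cast
        exact Finset.sum_congr rfl fun β _ => by rw [hg β β.2]
      obtain ⟨m, hm⟩ := hint
      -- norms
      have hnα : ‖α‖ = Real.sqrt 2 := by
        have := real_inner_self_eq_norm_mul_norm α
        rw [hlen α hαR] at this
        nlinarith [norm_nonneg α, Real.sq_sqrt (by norm_num : (2:ℝ) ≥ 0),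
          Real.sqrt_nonneg 2]
      have hnv : ‖v‖ = Real.sqrt 2 := by
        have := real_inner_self_eq_norm_mul_norm v
        rw [hvlen] at this
        nlinarith [norm_nonneg v, Real.sq_sqrt (by norm_num : (2:ℝ) ≥ 0),
          Real.sqrt_nonneg 2]
      have hprod : ‖α‖ * ‖v‖ = 2 := by
        rw [hnα, hnv]; exact Real.mul_self_sqrt (by norm_num)
      have hCS : |(inner ℝ α v : ℝ)| ≤ 2 := hprod ▸ abs_real_inner_le_norm α v
      have hm2 : |m| ≤ 2 := by
        have : |(m : ℝ)| ≤ 2 := hm ▸ hCS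
        exact_mod_cast this
      have hm0 : m ≠ 0 := by
        rintro rfl
        rw [hm] at hpos
        simp at hpos
      have hsqrt2pos : (0:ℝ) < Real.sqrt 2 := by positivity
      -- the negative root
      have hneg : -α ∈ R := by
        have := hrefl α hαR α hαR
        rw [hlen α hαR] at this
        convert this using 1
        module
      -- equality case of Cauchy-Schwarz
      have heqcase : ∀ β ∈ R, (inner ℝ β v : ℝ) = 2 → v = β := by
        intro β hβR hβv
        have hnβ : ‖β‖ = Real.sqrt 2 := by
          have := real_inner_self_eq_norm_mul_norm β
          rw [hlen β hβR] at this
          nlinarith [norm_nonneg β, Real.sq_sqrt (by norm_num : (2:ℝ) ≥ 0),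
            Real.sqrt_nonneg 2]
        have heq : (inner ℝ β v : ℝ) = ‖β‖ * ‖v‖ := by
          rw [hnβ, hnv, hβv, Real.mul_self_sqrt (by norm_num : (0:ℝ) ≤ 2)]
        have := inner_eq_norm_mul_iff_real.mp heq
        rw [hnβ, hnv] at this
        exact (smul_right_injective V (ne_of_gt hsqrt2pos) this).symm
      obtain ⟨hml, hmu⟩ := abs_le.mp hm2
      interval_cases m
      · -- m = -2 : v = -α
        have h2 : (inner ℝ (-α) v : ℝ) = 2 := by
          rw [inner_neg_left, hm]; norm_num
        exact (heqcase (-α) hneg h2) ▸ hneg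
      · -- m = -1 : c α < 0, use w = v + α
        have hcneg : c α < 0 := by
          by_contra h
          push_neg at h
          have h' : (0:ℝ) ≤ (c α : ℝ) := by exact_mod_cast h
          rw [hm] at hpos
          push_cast at hpos
          nlinarith
        set w := v + α with hw
        have hwlen : (inner ℝ w w : ℝ) = 2 := by
          have h1 : (inner ℝ v α : ℝ) = -1 := by
            rw [real_inner_comm, hm]; norm_num
          rw [hw]
          rw [inner_add_add_self, h1, hvlen, hlen α hαR, hm]
          norm_num
        set c' : V → ℤ := fun β => c β + if β = α then 1 else 0 with hc'
        have hrep : ∑ β ∈ R, c' β • β = w := by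
          rw [hc']
          simp only [add_smul, Finset.sum_add_distrib, hc, ite_smul, one_smul,
            zero_smul, Finset.sum_ite_eq' R α, if_pos hαR, hw]
        have hbound : ∑ β ∈ R, (c' β).natAbs ≤ n := by
          have e1 : ∑ β ∈ R.erase α, (c' β).natAbs + (c' α).natAbs
              = ∑ β ∈ R, (c' β).natAbs := Finset.sum_erase_add R _ hαR
          have e2 : ∑ β ∈ R.erase α, (c β).natAbs + (c α).natAbs
              = ∑ β ∈ R, (c β).natAbs := Finset.sum_erase_add R _ hαR
          have e3 : ∑ β ∈ R.erase α, (c' β).natAbs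
              = ∑ β ∈ R.erase α, (c β).natAbs := by
            refine Finset.sum_congr rfl fun β hβ => ?_
            rw [hc']
            simp [Finset.ne_of_mem_erase hβ]
          have e4 : (c' α).natAbs + 1 = (c α).natAbs := by
            rw [hc']; simp; omega
          omega
        have hwR : w ∈ R := ih w c' hrep hbound hwlen
        have : w - (inner ℝ α w : ℝ) • α ∈ R := hrefl α hαR w hwR
        have hαw : (inner ℝ α w : ℝ) = 1 := by
          rw [hw, inner_add_right, hm, hlen α hαR]; norm_num
        rw [hαw, one_smul, hw, add_sub_cancel_right] at this
        exact this
      · -- m = 0 : impossible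
        exact absurd rfl hm0
      · -- m = 1 : c α > 0, use w = v - α
        have hcpos : 0 < c α := by
          by_contra h
          push_neg at h
          have h' : (c α : ℝ) ≤ 0 := by exact_mod_cast h
          rw [hm] at hpos
          push_cast at hpos
          nlinarith
        set w := v - α with hw
        have hwlen : (inner ℝ w w : ℝ) = 2 := by
          have h1 : (inner ℝ v α : ℝ) = 1 := by
            rw [real_inner_comm, hm]; norm_num
          rw [hw, inner_sub_sub_self, h1, hvlen, hlen α hαR, hm]
          norm_num
        set c' : V → ℤ := fun β => c β - if β = α then 1 else 0 with hc'
        have hrep : ∑ β ∈ R, c' β • β = w := by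
          rw [hc']
          simp only [sub_smul, Finset.sum_sub_distrib, hc, ite_smul, one_smul,
            zero_smul, Finset.sum_ite_eq' R α, if_pos hαR, hw]
        have hbound : ∑ β ∈ R, (c' β).natAbs ≤ n := by
          have e1 : ∑ β ∈ R.erase α, (c' β).natAbs + (c' α).natAbs
              = ∑ β ∈ R, (c' β).natAbs := Finset.sum_erase_add R _ hαR
          have e2 : ∑ β ∈ R.erase α, (c β).natAbs + (c α).natAbs
              = ∑ β ∈ R, (c β).natAbs := Finset.sum_erase_add R _ hαR
          have e3 : ∑ β ∈ R.erase α, (c' β).natAbs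
              = ∑ β ∈ R.erase α, (c β).natAbs := by
            refine Finset.sum_congr rfl fun β hβ => ?_
            rw [hc']
            simp [Finset.ne_of_mem_erase hβ]
          have e4 : (c' α).natAbs + 1 = (c α).natAbs := by
            rw [hc']; simp; omega
          omega
        have hwR : w ∈ R := ih w c' hrep hbound hwlen
        have : w - (inner ℝ α w : ℝ) • α ∈ R := hrefl α hαR w hwR
        have hαw : (inner ℝ α w : ℝ) = -1 := by
          rw [hw, inner_sub_right, hm, hlen α hαR]; norm_num
        rw [hαw] at this
        convert this using 1
        rw [hw]; module
      · -- m = 2 : v = α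
        exact (heqcase α hαR (by rw [hm]; norm_num)) ▸ hαR

/-- Let `R` be an ADE root system in a Euclidean space `V`: a finite set of vectors of squared
length `2`, spanning `V`, with integral pairwise inner ℝ products, and stable under the
reflections `s_α(β) = β - (α·β)α` for `α ∈ R`. Then every vector `v` of the root lattice
`Q(R) = span_ℤ R` with `v·v = 2` belongs to `R`; that is, `R(Q(R)) = R`. -/
theorem root_of_mem_rootLattice {V : Type*}
    [NormedAddCommGroup V] [InnerProductSpace ℝ V] [FiniteDimensional ℝ V]
    (R : Finset V)
    (hlen : ∀ α ∈ R, (inner ℝ α α : ℝ) = 2)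
    (hspan : Submodule.span ℝ (R : Set V) = ⊤)
    (hintegral : ∀ α ∈ R, ∀ β ∈ R, ∃ m : ℤ, (inner ℝ α β : ℝ) = m)
    (hrefl : ∀ α ∈ R, ∀ β ∈ R, β - (inner ℝ α β : ℝ) • α ∈ R)
    (v : V) (hv : v ∈ Submodule.span ℤ (R : Set V)) (hvlen : (inner ℝ v v : ℝ) = 2) :
    v ∈ R := by
  obtain ⟨c, -, hc⟩ := Submodule.mem_span_finset.mp hv
  exact root_lattice_aux R hlen hintegral hrefl (∑ α ∈ R, (c α).natAbs) v c hc le_rfl hvlen
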